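/- Interval decomposition bound for 0 < p ≤ 1: with the same greedy construction of t_1 < ... < t_{q+1} = m as above (threshold ε^{4/p}‖x^(m)‖_p), one has q ≤ ε^{−4/p}. -/

import Mathlib

/-- The `ℓ_p` "norm" `(∑ i, |v i|^p)^(1/p)` of a vector in `ℝ^n`. -/
noncomputable def lpNorm (p : ℝ) {n : ℕ} (v : Fin n → ℝ) : ℝ :=
  (∑ i, |v i| ^ p) ^ (1 / p)

theorem stmt_14 (p : ℝ) (hp0 : 0 < p) (hp1 : p ≤ 1) (n m q : ℕ) (hq : 0 < q) (ε : ℝ)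
    (hε0 : 0 < ε) (hε1 : ε < 1)
    (x : ℕ → Fin n → ℝ)
    (hnn : ∀ i, 0 ≤ x 0 i)
    (hmono : ∀ s u : ℕ, s ≤ u → ∀ i, x s i ≤ x u i)
    (hxm : x m ≠ 0)
    (t : Fin q → ℕ) (ht : StrictMono t) (htm : ∀ k, t k ≤ m)
    (h1 : ε ^ ((4 : ℝ) / p) * lpNorm p (x m) ≤ lpNorm p (x (t ⟨0, hq⟩)))
    (hstep : ∀ k : Fin q, ∀ hk : k.1 + 1 < q,
      ε ^ ((4 : ℝ) / p) * lpNorm p (x m) ≤ lpNorm p (x (t ⟨k.1 + 1, hk⟩) - x (t k))) :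
    (q : ℝ) ≤ ε ^ (-((4 : ℝ) / p)) := by
  classical
  have hxnn : ∀ s i, 0 ≤ x s i := fun s i => (hnn i).trans (hmono 0 s (Nat.zero_le _) i)
  set S : ℝ := ∑ i, |x m i| ^ p with hS
  have hSnn : (0:ℝ) ≤ S :=
    Finset.sum_nonneg fun i _ => Real.rpow_nonneg (abs_nonneg _) p
  have hSpos : 0 < S := by
    obtain ⟨i, hi⟩ := Function.ne_iff.mp hxm
    refine Finset.sum_pos' (fun j _ => Real.rpow_nonneg (abs_nonneg _) p) ?_
    exact ⟨i, Finset.mem_univ i, Real.rpow_pos_of_pos (abs_pos.mpr hi) p⟩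
  have hqpos : (0:ℝ) < (q:ℝ) := Nat.cast_pos.mpr hq
  -- telescoping sequence
  set G : Fin n → ℕ → ℝ := fun i j =>
    if h : j - 1 < q then (if j = 0 then 0 else x (t ⟨j - 1, h⟩) i) else 0 with hG
  have hG0 : ∀ i, G i 0 = 0 := by intro i; simp [hG, hq]
  have hGsucc : ∀ (i : Fin n) (j : ℕ) (h : j < q), G i (j + 1) = x (t ⟨j, h⟩) i := by
    intro i j h; simp [hG, h]
  set v : Fin q → Fin n → ℝ := fun k i => G i (k.1 + 1) - G i k.1 with hv
  have hGk : ∀ (i : Fin n) (k : Fin q), 0 < k.1 →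
      ∀ hk1 : k.1 - 1 < q, G i k.1 = x (t ⟨k.1 - 1, hk1⟩) i := by
    intro i k hpos hk1
    have := hGsucc i (k.1 - 1) hk1
    rwa [Nat.sub_add_cancel hpos] at this
  have hvnn : ∀ k i, 0 ≤ v k i := by
    intro k i
    rcases Nat.eq_zero_or_pos k.1 with h0 | hpos
    · simp only [hv, h0, hG0]
      rw [hGsucc i 0 (h0 ▸ k.2)]
      simpa using hxnn _ i
    · have hk1 : k.1 - 1 < q := lt_of_le_of_lt (Nat.pred_le _) k.2
      simp only [hv, hGk i k hpos hk1, hGsucc i k.1 k.2, sub_nonneg]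
      exact hmono _ _ (ht.monotone (by simp [Fin.le_def, Nat.pred_le])) i
  -- each block has ℓ_p norm at least the threshold
  have hvlp : ∀ k : Fin q, ε ^ ((4 : ℝ) / p) * lpNorm p (x m) ≤ lpNorm p (v k) := by
    intro k
    rcases Nat.eq_zero_or_pos k.1 with h0 | hpos
    · have : v k = x (t ⟨0, hq⟩) := by
        funext i
        have hk0 : k = ⟨0, hq⟩ := Fin.ext h0
        simp [hv, hk0, hG0, hGsucc i 0 hq]
      rw [this]; exact h1
    · have hk1 : k.1 - 1 < q := lt_of_le_of_lt (Nat.pred_le _) k.2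
      have hk1' : (k.1 - 1) + 1 < q := by omega
      have hstep' := hstep ⟨k.1 - 1, hk1⟩ hk1'
      have hkeq : (⟨(k.1 - 1) + 1, hk1'⟩ : Fin q) = k := by
        apply Fin.ext; simp only [Fin.val_mk]; omega
      rw [hkeq] at hstep'
      have : v k = x (t k) - x (t ⟨k.1 - 1, hk1⟩) := by
        funext i
        simp [hv, hGk i k hpos hk1, hGsucc i k.1 k.2]
      rw [this]; exact hstep'
  have hlpnn : 0 ≤ lpNorm p (x m) := Real.rpow_nonneg hSnn _
  -- lower bound for each block's p-th power sum
  have hlow : ∀ k : Fin q, ε ^ (4:ℝ) * S ≤ ∑ i, |v k i| ^ p := by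
    intro k
    have h := hvlp k
    have hA : (0:ℝ) ≤ ∑ i, |v k i| ^ p :=
      Finset.sum_nonneg fun i _ => Real.rpow_nonneg (abs_nonneg _) p
    have hc0 : 0 ≤ ε ^ ((4 : ℝ) / p) * lpNorm p (x m) :=
      mul_nonneg (Real.rpow_nonneg hε0.le _) hlpnn
    have hLp : (lpNorm p (v k)) ^ p = ∑ i, |v k i| ^ p := by
      rw [lpNorm, ← Real.rpow_mul hA, one_div_mul_cancel hp0.ne', Real.rpow_one]
    have hC : (ε ^ ((4:ℝ)/p) * lpNorm p (x m)) ^ p = ε ^ (4:ℝ) * S := by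
      rw [Real.mul_rpow (Real.rpow_nonneg hε0.le _) hlpnn, ← Real.rpow_mul hε0.le,
        div_mul_cancel₀ _ hp0.ne', lpNorm, ← Real.rpow_mul hSnn,
        one_div_mul_cancel hp0.ne', Real.rpow_one]
    have h2 := Real.rpow_le_rpow hc0 h hp0.le
    rw [hC, hLp] at h2
    exact h2
  -- upper bound: for each coordinate
  have hup : ∀ i : Fin n, ∑ k : Fin q, |v k i| ^ p ≤ (q:ℝ) ^ ((1:ℝ) - p) * |x m i| ^ p := by
    intro i
    have hsum : ∑ k : Fin q, v k i ≤ x m i := by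
      have ht1 : ∑ k : Fin q, v k i = G i q - G i 0 := by
        simp only [hv]
        rw [Fin.sum_univ_eq_sum_range (fun j => G i (j + 1) - G i j) q]
        exact Finset.sum_range_sub (G i) q
      rw [ht1, hG0, sub_zero]
      have hq1 : q - 1 < q := Nat.pred_lt hq.ne'
      have hGq : G i q = x (t ⟨q - 1, hq1⟩) i := by
        have := hGsucc i (q - 1) hq1
        rwa [Nat.sub_add_cancel hq] at this
      rw [hGq]
      exact hmono _ _ (htm _) i
    have hr : (1:ℝ) ≤ 1 / p := by rw [le_div_iff₀ hp0]; linarith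
    have key := Real.rpow_sum_le_const_mul_sum_rpow_of_nonneg (f := fun k => |v k i| ^ p)
      Finset.univ hr (fun k _ => Real.rpow_nonneg (abs_nonneg _) p)
    have hsimp : ∀ k : Fin q, (|v k i| ^ p) ^ ((1:ℝ)/p) = |v k i| := by
      intro k
      rw [← Real.rpow_mul (abs_nonneg _), mul_one_div_cancel hp0.ne', Real.rpow_one]
    simp only [Finset.card_univ, Fintype.card_fin] at key
    rw [Finset.sum_congr rfl (fun k _ => hsimp k)] at key
    have hL : (0:ℝ) ≤ ∑ k : Fin q, |v k i| ^ p :=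
      Finset.sum_nonneg fun k _ => Real.rpow_nonneg (abs_nonneg _) p
    have hRHS : ∑ k : Fin q, |v k i| ≤ x m i := by
      calc ∑ k : Fin q, |v k i| = ∑ k : Fin q, v k i :=
            Finset.sum_congr rfl (fun k _ => abs_of_nonneg (hvnn k i))
        _ ≤ x m i := hsum
    have key2 : (∑ k : Fin q, |v k i| ^ p) ^ ((1:ℝ)/p) ≤ (q:ℝ) ^ ((1:ℝ)/p - 1) * x m i :=
      key.trans (mul_le_mul_of_nonneg_left hRHS (Real.rpow_nonneg hqpos.le _))
    have key3 := Real.rpow_le_rpow (Real.rpow_nonneg hL _) key2 hp0.le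
    rw [← Real.rpow_mul hL, one_div_mul_cancel hp0.ne', Real.rpow_one] at key3
    rw [Real.mul_rpow (Real.rpow_nonneg hqpos.le _) (hxnn m i)] at key3
    rw [← Real.rpow_mul hqpos.le] at key3
    have he : ((1:ℝ)/p - 1) * p = 1 - p := by field_simp
    rw [he] at key3
    rwa [abs_of_nonneg (hxnn m i)]
  -- combine
  have main : (q:ℝ) * (ε ^ (4:ℝ) * S) ≤ (q:ℝ) ^ ((1:ℝ) - p) * S := by
    calc (q:ℝ) * (ε ^ (4:ℝ) * S) = ∑ _k : Fin q, ε ^ (4:ℝ) * S := by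
          rw [Finset.sum_const]; simp [mul_comm]
      _ ≤ ∑ k : Fin q, ∑ i, |v k i| ^ p := Finset.sum_le_sum fun k _ => hlow k
      _ = ∑ i, ∑ k : Fin q, |v k i| ^ p := Finset.sum_comm
      _ ≤ ∑ i, (q:ℝ) ^ ((1:ℝ) - p) * |x m i| ^ p := Finset.sum_le_sum fun i _ => hup i
      _ = (q:ℝ) ^ ((1:ℝ) - p) * S := by rw [← Finset.mul_sum]
  have main2 : (q:ℝ) * ε ^ (4:ℝ) ≤ (q:ℝ) ^ ((1:ℝ) - p) :=
    (mul_le_mul_iff_of_pos_right hSpos).mp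
      (by linarith [main] : ((q:ℝ) * ε ^ (4:ℝ)) * S ≤ (q:ℝ) ^ ((1:ℝ) - p) * S)
  have hqp1 : (q:ℝ) ^ (p - 1) * (q:ℝ) = (q:ℝ) ^ p := by
    nth_rewrite 2 [← Real.rpow_one (q:ℝ)]
    rw [← Real.rpow_add hqpos]; norm_num
  have main3 : (q:ℝ) ^ p * ε ^ (4:ℝ) ≤ 1 := by
    have hqp : (0:ℝ) < (q:ℝ) ^ (p - 1) := Real.rpow_pos_of_pos hqpos _
    have h5 := mul_le_mul_of_nonneg_left main2 hqp.le
    calc (q:ℝ) ^ p * ε ^ (4:ℝ) = (q:ℝ) ^ (p-1) * ((q:ℝ) * ε ^ (4:ℝ)) := by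
          rw [← mul_assoc, hqp1]
      _ ≤ (q:ℝ) ^ (p-1) * (q:ℝ) ^ ((1:ℝ) - p) := h5
      _ = 1 := by rw [← Real.rpow_add hqpos]; norm_num
  have hε4 : (0:ℝ) < ε ^ (4:ℝ) := Real.rpow_pos_of_pos hε0 _
  have main4 : (q:ℝ) ^ p ≤ ε ^ (-(4:ℝ)) := by
    have h6 : ε ^ (-(4:ℝ)) * ε ^ (4:ℝ) = 1 := by
      rw [← Real.rpow_add hε0]; norm_num
    rw [← mul_le_mul_iff_of_pos_right hε4, h6]; exact main3
  have final := Real.rpow_le_rpow (Real.rpow_nonneg hqpos.le _) main4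
    (by positivity : (0:ℝ) ≤ 1 / p)
  rw [← Real.rpow_mul hqpos.le, mul_one_div_cancel hp0.ne', Real.rpow_one,
    ← Real.rpow_mul hε0.le] at final
  convert final using 2
  ring
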